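/- Let M be a finite-dimensional second-countable Hausdorff smooth manifold, E a sheaf of Ω⁰-modules containing Ω⁰ as a subsheaf, U ⊆ M open, T ⊆ U open with closure(T) ⊆ U, σ ∈ Ω⁰(U) with σ ≡ 1 on T, and ρ ∈ Ω⁰(U) with supp(ρ) ⊆ T. Then for every monomial x ∈ F(E(U)) and every n ∈ ℤ, the element ρ ∘ₙ x − ρ ∘ₙ (σ∗x) lies in the supported vertex algebra ideal K(E(U)); equivalently, ρₙx = ρₙ(σ∗x) in the quotient F(E(U))/K(E(U)). Here σ∗x denotes the monomial obtained from x by multiplying every leaf by σ. -/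

import Mathlib

noncomputable section

/-!
Common framework: "infinite free algebras" in the sense of Eller, *Chiral vector bundles*.

An infinite free algebra (completed) is modelled as a topological vector space `F`
over a field `k` of characteristic zero, with a distinguished vector `one` and a
`ℤ`-indexed family of bilinear products `circ n`.  The formal infinite sums provided
by the completion are interpreted by `tsum` (`∑'`).  An ideal is a subspace closed
under all the products (on both sides) and under convergent (formal) infinite sums.
-/

/-- An infinite free algebra (completed). -/
structure IFA (k F : Type) [Field k] [CharZero k] [AddCommGroup F] [Module k F]
    [TopologicalSpace F] where
  /-- the distinguished vector `1` -/
  one : F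
  /-- the products `∘ₙ`; `circ n x y` is `x ∘ₙ y` -/
  circ : ℤ → F → F → F
  circ_add_left : ∀ (n : ℤ) (x x' y : F), circ n (x + x') y = circ n x y + circ n x' y
  circ_add_right : ∀ (n : ℤ) (x y y' : F), circ n x (y + y') = circ n x y + circ n x y'
  circ_smul_left : ∀ (n : ℤ) (c : k) (x y : F), circ n (c • x) y = c • circ n x y
  circ_smul_right : ∀ (n : ℤ) (c : k) (x y : F), circ n x (c • y) = c • circ n x y

namespace IFA

/-- The binomial coefficient `C(m, K)` for `m : ℤ`, `K : ℕ`, as an element of `k`. -/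
def zbinom (k : Type) [Field k] [CharZero k] (m : ℤ) (K : ℕ) : k :=
  (∏ i ∈ Finset.range K, ((m : k) - (i : k))) / (K.factorial : k)

variable {k F : Type} [Field k] [CharZero k] [AddCommGroup F] [Module k F]
  [TopologicalSpace F] (A : IFA k F)

/-- `D x := x ∘₋₂ 1`. -/
def D (x : F) : F := A.circ (-2) x A.one

/-- identity generators `i⟦x;n⟧ := 1ₙx − δ_{n,−1}x` -/
def geni (x : F) (n : ℤ) : F := A.circ n A.one x - (if n = -1 then x else 0)

/-- derivation generators `d⟦x,y;n⟧ := D(xₙy) − (Dx)ₙy − xₙ(Dy)` -/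
def gend (x y : F) (n : ℤ) : F :=
  A.D (A.circ n x y) - A.circ n (A.D x) y - A.circ n x (A.D y)

/-- shift generators `e⟦x,y;n⟧ := (Dx)ₙy + n·x_{n−1}y` -/
def gene (x y : F) (n : ℤ) : F := A.circ n (A.D x) y + (n : k) • A.circ (n - 1) x y

/-- quasi-commutativity generators
`qc⟦x,y;n⟧ := xₙy + Σ_{K≥0}((−1)^{n+K}/K!)·D^K(y_{n+K}x)` -/
def genqc (x y : F) (n : ℤ) : F :=
  A.circ n x y +
    ∑' K : ℕ, (((-1 : k) ^ (n + (K : ℤ))) * ((K.factorial : k)⁻¹)) •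
      (A.D)^[K] (A.circ (n + (K : ℤ)) y x)

/-- quasi-associativity generators
`qa⟦x,y,z;m,n⟧ := (x_my)_nz − Σ_{K≥0} C(m,K)(−1)^K (x_{m−K}(y_{n+K}z) − (−1)^m y_{m+n−K}(x_Kz))` -/
def genqa (x y z : F) (m n : ℤ) : F :=
  A.circ n (A.circ m x y) z -
    ∑' K : ℕ, ((zbinom k m K) * ((-1 : k) ^ K)) •
      (A.circ (m - (K : ℤ)) x (A.circ (n + (K : ℤ)) y z)
        - ((-1 : k) ^ m) • A.circ (m + n - (K : ℤ)) y (A.circ (K : ℤ) x z))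

/-- An ideal of the (completed) infinite free algebra: a subspace closed under all the
products `∘ₙ` by arbitrary elements on both sides, and under the formal (convergent)
infinite sums provided by the completion. -/
def IsIdeal (J : Submodule k F) : Prop :=
  (∀ (n : ℤ) (x y : F), y ∈ J → A.circ n x y ∈ J ∧ A.circ n y x ∈ J) ∧
    (∀ f : ℕ → F, (∀ i, f i ∈ J) → Summable f → (∑' i, f i) ∈ J)

/-- The ideal generated by a set `S ⊆ F`. -/
def idealGenBy (S : Set F) : Submodule k F := sInf {J | A.IsIdeal J ∧ S ⊆ J}

/-- The generators of the vertex algebra ideal other than the locality generators: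
`i⟦x;n⟧, d⟦x,y;n⟧, qc⟦x,y;n⟧` for `n = −1` and all `n ≥ 0`; `qa⟦x,y,z;m,n⟧` for
`m, n ∈ {−1,0,1,2,…}`; and `e⟦x,y;n⟧` for all `n ∈ ℤ`. -/
def baseGens : Set F :=
  {w | ∃ (x : F) (n : ℤ), -1 ≤ n ∧ w = A.geni x n} ∪
  {w | ∃ (x y : F) (n : ℤ), -1 ≤ n ∧ w = A.gend x y n} ∪
  {w | ∃ (x y : F) (n : ℤ), -1 ≤ n ∧ w = A.genqc x y n} ∪
  {w | ∃ (x y z : F) (m n : ℤ), -1 ≤ m ∧ -1 ≤ n ∧ w = A.genqa x y z m n} ∪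
  {w | ∃ (x y : F) (n : ℤ), w = A.gene x y n}

/-- The vertex algebra ideal `I` associated to the locality function `N : F × F → ℕ`:
the ideal generated by the base generators together with the locality elements
`xₙy` for all `x, y ∈ F` and `n ≥ N(x,y)`. -/
def vertexIdeal (N : F → F → ℕ) : Submodule k F :=
  A.idealGenBy
    (A.baseGens ∪ {w | ∃ (x y : F) (n : ℤ), (N x y : ℤ) ≤ n ∧ w = A.circ n x y})

end IFA
/-!
Concrete construction of the (completed) infinite free algebra `F(v)` generated by a
unital vector space `v`: product shapes are binary trees with integer-labelled internal
nodes; the span of the monomials of a fixed shape is the corresponding iterated tensor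
power of `v`; and the completion (allowing formal infinite sums of monomials of pairwise
distinct product shapes) is the direct product over all shapes.  Each shape component
carries the discrete topology and `F(v)` the product topology, so that a family is
summable exactly when every shape component receives only finitely many contributions.
-/

/-- Product shapes: full binary rooted trees with an integer at each internal node. -/
inductive Shape : Type
  | leaf : Shape
  | node : ℤ → Shape → Shape → Shape
  deriving DecidableEq

/-- A bundled `k`-vector space. -/
structure MC (k : Type) [Field k] where
  T : Type
  [grp : AddCommGroup T]
  [mod : Module k T]

attribute [instance] MC.grp MC.mod

variable (k : Type) [Field k] [CharZero k] (V : Type) [AddCommGroup V] [Module k V]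

/-- The space spanned by the monomials of a given product shape (bundled). -/
def monData : Shape → MC k
  | .leaf => MC.mk V
  | .node _ l r => MC.mk (TensorProduct k (monData l).T (monData r).T)

/-- The space spanned by the monomials of a given product shape. -/
abbrev MonSp (s : Shape) : Type := (monData k V s).T

instance (s : Shape) : TopologicalSpace (MonSp k V s) := ⊥

/-- The completed infinite free algebra `F(v)` on the (unital) vector space `v = V`. -/
abbrev FV : Type := ∀ s : Shape, MonSp k V s

/-- The embedding of the generating space `v` into `F(v)` (the length-1 component). -/
def ι (a : V) : FV k V := fun s =>
  match s with
  | .leaf => a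
  | .node _ _ _ => 0

/-- The product `x ∘ₙ y` on `F(v)`. -/
def op (n : ℤ) (x y : FV k V) : FV k V := fun s =>
  match s with
  | .leaf => 0
  | .node m l r => if n = m then TensorProduct.tmul k (x l) (y r) else 0

/-- `F(v)` as an infinite free algebra, with distinguished vector the image of the
distinguished vector `e ∈ v`. -/
def freeIFA (e : V) : IFA k (FV k V) where
  one := ι k V e
  circ := op k V
  circ_add_left := by
    intro n x x' y; funext s
    cases s with
    | leaf => simp [op]
    | node m l r =>
        by_cases h : n = m <;>
          simp [op, h, Pi.add_apply, TensorProduct.add_tmul] <;> rfl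
  circ_add_right := by
    intro n x y y'; funext s
    cases s with
    | leaf => simp [op]
    | node m l r =>
        by_cases h : n = m <;>
          simp [op, h, Pi.add_apply, TensorProduct.tmul_add] <;> rfl
  circ_smul_left := by
    intro n c x y; funext s
    cases s with
    | leaf => simp [op]
    | node m l r =>
        by_cases h : n = m
        · simp only [op, h, Pi.smul_apply]
          exact (TensorProduct.smul_tmul' c (x l) (y r)).symm
        · simp [op, h]
  circ_smul_right := by
    intro n c x y; funext s
    cases s with
    | leaf => simp [op]
    | node m l r =>
        by_cases h : n = m <;>
          simp [op, h, Pi.smul_apply, TensorProduct.tmul_smul] <;> rfl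

/-- The vertex algebra ideal `I(v)` of `F(v)`: generated by the base generators
together with the locality elements `uₙv` for `u, v ∈ v` (the generating space) and
`n ≥ N(u,v)`. -/
def genVertexIdeal (e : V) (N : V → V → ℕ) : Submodule k (FV k V) :=
  (freeIFA k V e).idealGenBy
    ((freeIFA k V e).baseGens ∪
      {w | ∃ (a b : V) (n : ℤ), (N a b : ℤ) ≤ n ∧ w = op k V n (ι k V a) (ι k V b)})
/-- The shape-component of the map `F(v) → F(v′)` induced by a linear map `φ : v → v′`
(functoriality of tensor powers). -/
def monMap {k : Type} [Field k] [CharZero k]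
    {V W : Type} [AddCommGroup V] [Module k V] [AddCommGroup W] [Module k W]
    (φ : V →ₗ[k] W) : ∀ s : Shape, MonSp k V s →ₗ[k] MonSp k W s
  | .leaf => φ
  | .node _ l r => TensorProduct.map (monMap φ l) (monMap φ r)

/-- The map `Φ : F(v) → F(v′)` induced by a linear map `φ : v → v′`; it is determined
by `Φ(u) = φ(u)` for `u ∈ v` and `Φ(xₙy) = Φ(x)ₙΦ(y)`. -/
def FVmap {k : Type} [Field k] [CharZero k]
    {V W : Type} [AddCommGroup V] [Module k V] [AddCommGroup W] [Module k W]
    (φ : V →ₗ[k] W) (x : FV k V) : FV k W := fun s => monMap φ s (x s)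
/-!
Sheaves of `Ω⁰`-modules on a smooth manifold, the support generators, and the
supported vertex algebra ideal `K`.
-/

open scoped Manifold
open TopologicalSpace

/-- Leaf-labelled monomial trees: full binary rooted trees with an integer at each
internal node and an element of `X` at each leaf. -/
inductive LTree (X : Type) : Type
  | leaf : X → LTree X
  | node : ℤ → LTree X → LTree X → LTree X

/-- The product shape of a monomial tree. -/
def LTree.shape {X : Type} : LTree X → Shape
  | .leaf _ => .leaf
  | .node n l r => .node n l.shape r.shape

/-- The element of the shape component determined by a monomial tree. -/
def tensorOf (k X : Type) [Field k] [CharZero k] [AddCommGroup X] [Module k X] :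
    (t : LTree X) → MonSp k X t.shape
  | .leaf a => a
  | .node _ l r => TensorProduct.tmul k (tensorOf k X l) (tensorOf k X r)

/-- The monomial of `F(v)` determined by a monomial tree. -/
def mono (k X : Type) [Field k] [CharZero k] [AddCommGroup X] [Module k X]
    (t : LTree X) : FV k X :=
  Function.update (0 : FV k X) t.shape (tensorOf k X t)

/-- Apply a map to every leaf of a monomial tree (e.g. multiplication of every leaf by
a fixed smooth function `σ`, giving `σ ∗ x`). -/
def leafMap {X : Type} (g : X → X) : LTree X → LTree X
  | .leaf a => .leaf (g a)
  | .node n l r => .node n (leafMap g l) (leafMap g r)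

variable {E0 : Type} [NormedAddCommGroup E0] [NormedSpace ℝ E0] [FiniteDimensional ℝ E0]
  {H : Type} [TopologicalSpace H] (IM : ModelWithCorners ℝ E0 H)
  (M : Type) [TopologicalSpace M] [ChartedSpace H M] [IsManifold IM (⊤ : ℕ∞) M]
  [SecondCountableTopology M] [T2Space M]

/-- The ring `Ω⁰(U)` of smooth real-valued functions on an open subset `U` of `M`. -/
abbrev SmoothFn (U : Opens M) : Type := ContMDiffMap IM (𝓘(ℝ, ℝ)) U ℝ (⊤ : ℕ∞)

/-- Restriction of smooth functions along an inclusion of open sets. -/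
def fres {U V : Opens M} (h : V ≤ U) (f : SmoothFn IM M U) : SmoothFn IM M V :=
  ⟨fun x => f (Opens.inclusion h x), f.contMDiff.comp (contMDiff_inclusion h)⟩

/-- A sheaf `E` of `Ω⁰`-modules on `M` containing `Ω⁰` as a subsheaf.  Each `E(U)` is
a real vector space, a module over the smooth functions `Ω⁰(U)`, with compatible
restriction maps satisfying the sheaf axioms, and with a compatible injection of
`Ω⁰(U)` into `E(U)`; the distinguished vector `1 ∈ E(U)` is the image of the constant
function `1`. -/
structure OmegaModSheaf where
  sec : Opens M → Type
  [grp : ∀ U, AddCommGroup (sec U)]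
  [mod : ∀ U, Module ℝ (sec U)]
  /-- the action of `Ω⁰(U)` on `E(U)` -/
  fsmul : ∀ (U : Opens M), SmoothFn IM M U → sec U →ₗ[ℝ] sec U
  fsmul_one : ∀ (U : Opens M) (s : sec U), fsmul U 1 s = s
  fsmul_mul : ∀ (U : Opens M) (f g : SmoothFn IM M U) (s : sec U),
    fsmul U (f * g) s = fsmul U f (fsmul U g s)
  fsmul_add : ∀ (U : Opens M) (f g : SmoothFn IM M U) (s : sec U),
    fsmul U (f + g) s = fsmul U f s + fsmul U g s
  /-- the restriction maps of `E` -/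
  res : ∀ {U V : Opens M}, V ≤ U → sec U →ₗ[ℝ] sec V
  res_self : ∀ (U : Opens M) (s : sec U), res (le_refl U) s = s
  res_res : ∀ {U V W : Opens M} (hWV : W ≤ V) (hVU : V ≤ U) (s : sec U),
    res hWV (res hVU s) = res (hWV.trans hVU) s
  res_fsmul : ∀ {U V : Opens M} (h : V ≤ U) (f : SmoothFn IM M U) (s : sec U),
    res h (fsmul U f s) = fsmul V (fres IM M h f) (res h s)
  /-- the inclusion of `Ω⁰` into `E` -/
  emb : ∀ U : Opens M, SmoothFn IM M U →ₗ[ℝ] sec U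
  emb_inj : ∀ U : Opens M, Function.Injective (emb U)
  emb_res : ∀ {U V : Opens M} (h : V ≤ U) (f : SmoothFn IM M U),
    res h (emb U f) = emb V (fres IM M h f)
  emb_fsmul : ∀ (U : Opens M) (f g : SmoothFn IM M U),
    fsmul U f (emb U g) = emb U (f * g)
  /-- sheaf axiom: locality/uniqueness for `E` -/
  locality : ∀ {U : Opens M} {idx : Type} (W : idx → Opens M) (hW : ∀ i, W i ≤ U),
    (U : Set M) ⊆ (⋃ i, (W i : Set M)) →
      ∀ s : sec U, (∀ i, res (hW i) s = 0) → s = 0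
  /-- sheaf axiom: gluing/existence for `E` -/
  glue : ∀ {U : Opens M} {idx : Type} (W : idx → Opens M) (hW : ∀ i, W i ≤ U),
    (U : Set M) ⊆ (⋃ i, (W i : Set M)) →
      ∀ sf : ∀ i, sec (W i),
        (∀ i j, res (inf_le_left : W i ⊓ W j ≤ W i) (sf i) =
          res (inf_le_right : W i ⊓ W j ≤ W j) (sf j)) →
        ∃ s : sec U, ∀ i, res (hW i) s = sf i

attribute [instance] OmegaModSheaf.grp OmegaModSheaf.mod

namespace OmegaModSheaf

variable {IM} {M} (e : OmegaModSheaf IM M)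

/-- The support of a section `s ∈ E(U)`: the complement in `U` of the union of all
open `W ≤ U` on which `s` restricts to `0`. -/
def suppOf {U : Opens M} (s : e.sec U) : Set M :=
  {x | x ∈ (U : Set M) ∧
    ∀ (W : Opens M) (h : W ≤ U), e.res h s = 0 → x ∉ (W : Set M)}

/-- The common support of a monomial, defined recursively by
`supp(xₙy) = closure (interior (supp x) ∩ interior (supp y))`. -/
def suppT {U : Opens M} : LTree (e.sec U) → Set M
  | .leaf a => e.suppOf a
  | .node _ l r => closure (interior (suppT l) ∩ interior (suppT r))

/-- `F(E(U))`, as an infinite free algebra with distinguished vector the image of the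
constant function `1`. -/
def sheafIFA (U : Opens M) : IFA ℝ (FV ℝ (e.sec U)) :=
  freeIFA ℝ (e.sec U) (e.emb U 1)

/-- The generators of the (plain) vertex algebra ideal `I(E(U))`, with constant
locality function `N ≡ N₀` imposed on the generating subspace `E(U)`. -/
def iGens (U : Opens M) (N₀ : ℕ) : Set (FV ℝ (e.sec U)) :=
  (e.sheafIFA U).baseGens ∪
    {w | ∃ (a b : e.sec U) (n : ℤ), (N₀ : ℤ) ≤ n ∧
      w = op ℝ (e.sec U) n (ι ℝ (e.sec U) a) (ι ℝ (e.sec U) b)}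

/-- The vertex algebra ideal `I(E(U))`. -/
def iIdeal (U : Opens M) (N₀ : ℕ) : Submodule ℝ (FV ℝ (e.sec U)) :=
  (e.sheafIFA U).idealGenBy (e.iGens U N₀)

/-- The supported vertex algebra ideal `K(E(U))`: generated by `I(E(U))` together with
the common-support generators `x − π(x)`, i.e. the composite monomials whose common
support is empty. -/
def kIdeal (U : Opens M) (N₀ : ℕ) : Submodule ℝ (FV ℝ (e.sec U)) :=
  (e.sheafIFA U).idealGenBy
    (e.iGens U N₀ ∪
      {w | ∃ t : LTree (e.sec U), (∃ n l r, t = .node n l r) ∧ e.suppT t = ∅ ∧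
        w = mono ℝ (e.sec U) t})

end OmegaModSheaf

section AuxOps

variable {k : Type} [Field k] [CharZero k] {V : Type} [AddCommGroup V] [Module k V]

lemma op_add_right' (n : ℤ) (x y y' : FV k V) :
    op k V n x (y + y') = op k V n x y + op k V n x y' := by
  funext s; cases s with
  | leaf => simp [op]
  | node m l r => by_cases h : n = m <;> simp [op, h, TensorProduct.tmul_add] <;> rfl

lemma op_smul_right' (n : ℤ) (c : k) (x y : FV k V) :
    op k V n x (c • y) = c • op k V n x y := by
  funext s; cases s with
  | leaf => simp [op]
  | node m l r => by_cases h : n = m <;> simp [op, h, TensorProduct.tmul_smul] <;> rfl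

lemma op_sub_right' (n : ℤ) (x y y' : FV k V) :
    op k V n x (y - y') = op k V n x y - op k V n x y' := by
  funext s; cases s with
  | leaf => simp [op]
  | node m l r => by_cases h : n = m <;> simp [op, h, TensorProduct.tmul_sub] <;> rfl

lemma op_add_left' (n : ℤ) (x x' y : FV k V) :
    op k V n (x + x') y = op k V n x y + op k V n x' y := by
  funext s; cases s with
  | leaf => simp [op]
  | node m l r => by_cases h : n = m <;> simp [op, h, TensorProduct.add_tmul] <;> rfl

lemma op_smul_left' (n : ℤ) (c : k) (x y : FV k V) :
    op k V n (c • x) y = c • op k V n x y := by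
  funext s; cases s with
  | leaf => simp [op]
  | node m l r =>
      by_cases h : n = m
      · simp only [op, h, Pi.smul_apply]
        exact (TensorProduct.smul_tmul' c (x l) (y r)).symm
      · simp [op, h]

lemma op_sub_left' (n : ℤ) (x x' y : FV k V) :
    op k V n (x - x') y = op k V n x y - op k V n x' y := by
  funext s; cases s with
  | leaf => simp [op]
  | node m l r => by_cases h : n = m <;> simp [op, h, TensorProduct.sub_tmul] <;> rfl

lemma iota_sub (a b : V) : ι k V (a - b) = ι k V a - ι k V b := by
  funext s; cases s with
  | leaf => simp [ι] <;> rfl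
  | node m l r => simp [ι]

lemma mono_leaf (a : V) : mono k V (.leaf a) = ι k V a := by
  funext s; cases s with
  | leaf =>
      show Function.update (0 : FV k V) Shape.leaf a Shape.leaf = a
      exact Function.update_self _ _ _
  | node m l r =>
      show Function.update (0 : FV k V) Shape.leaf a (Shape.node m l r) = 0
      exact Function.update_of_ne (by simp : Shape.node m l r ≠ Shape.leaf) _ _

lemma mono_apply_ne (t : LTree V) (s : Shape) (h : s ≠ t.shape) :
    mono k V t s = 0 := by
  show Function.update (0 : FV k V) t.shape (tensorOf k V t) s = 0
  rw [Function.update_of_ne h]; rfl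

lemma mono_apply_self (t : LTree V) : mono k V t t.shape = tensorOf k V t :=
  Function.update_self _ _ _

lemma mono_node (n : ℤ) (l r : LTree V) :
    mono k V (.node n l r) = op k V n (mono k V l) (mono k V r) := by
  funext s
  cases s with
  | leaf =>
      rw [mono_apply_ne _ _ (by simp [LTree.shape])]
      rfl
  | node m sl sr =>
      show mono k V (.node n l r) (Shape.node m sl sr)
          = if n = m then TensorProduct.tmul k (mono k V l sl) (mono k V r sr) else 0
      by_cases hm : n = m
      · subst hm
        rw [if_pos rfl]
        by_cases hl : sl = l.shape
        · by_cases hr : sr = r.shape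
          · subst hl; subst hr
            rw [mono_apply_self, mono_apply_self]
            exact mono_apply_self (LTree.node n l r)
          · rw [mono_apply_ne r sr hr, TensorProduct.tmul_zero,
                mono_apply_ne _ _ (by simp [LTree.shape, hr])]; rfl
        · rw [mono_apply_ne l sl hl, TensorProduct.zero_tmul,
              mono_apply_ne _ _ (by simp [LTree.shape, hl])]; rfl
      · rw [if_neg hm, mono_apply_ne _ _ (by
          simp only [LTree.shape, ne_eq, Shape.node.injEq, not_and]
          intro h _; exact absurd h.symm hm)]; rfl

/-- Right multiplication `y ↦ x ∘ₙ y` as a linear map. -/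
def opRL (n : ℤ) (x : FV k V) : FV k V →ₗ[k] FV k V where
  toFun y := op k V n x y
  map_add' := op_add_right' n x
  map_smul' c y := op_smul_right' n c x y

/-- Left multiplication `x ↦ x ∘ₙ y` as a linear map. -/
def opLL (n : ℤ) (y : FV k V) : FV k V →ₗ[k] FV k V where
  toFun x := op k V n x y
  map_add' x x' := op_add_left' n x x' y
  map_smul' c x := op_smul_left' n c x y

end AuxOps

open TopologicalSpace in
/-- With `T`, `σ` as in the bump function lemma and
`ρ ∈ Ω⁰(U)` supported in `T`, for every monomial `x ∈ F(E(U))` and every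
`n ∈ ℤ`, the element `ρ ∘ₙ x − ρ ∘ₙ (σ∗x)` lies in the supported vertex algebra
ideal `K(E(U))`; equivalently `ρₙx = ρₙ(σ∗x)` in `F(E(U))/K(E(U))`. -/
theorem statement18 {E0 : Type} [NormedAddCommGroup E0] [NormedSpace ℝ E0] [FiniteDimensional ℝ E0]
    {H : Type} [TopologicalSpace H] (IM : ModelWithCorners ℝ E0 H)
    (M : Type) [TopologicalSpace M] [ChartedSpace H M] [IsManifold IM (⊤ : ℕ∞) M]
    [SecondCountableTopology M] [T2Space M]
    (e : OmegaModSheaf IM M) (U : Opens M) (N₀ : ℕ) (T : Opens M) (hTU : T ≤ U)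
    (hT : closure (T : Set M) ⊆ (U : Set M))
    (σ : SmoothFn IM M U) (hσ : ∀ x : U, (x : M) ∈ (T : Set M) → σ x = 1)
    (ρ : SmoothFn IM M U)
    (hρ : tsupport (⇑ρ) ⊆ (fun x : U => (x : M)) ⁻¹' (T : Set M)) :
    ∀ (t : LTree (e.sec U)) (n : ℤ),
      op ℝ (e.sec U) n (ι ℝ (e.sec U) (e.emb U ρ)) (mono ℝ (e.sec U) t) -
          op ℝ (e.sec U) n (ι ℝ (e.sec U) (e.emb U ρ))
            (mono ℝ (e.sec U) (leafMap (fun a => e.fsmul U σ a) t))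
        ∈ e.kIdeal U N₀ := by
  classical
  set g : e.sec U → e.sec U := fun a => e.fsmul U σ a with hg
  set S : Set (FV ℝ (e.sec U)) :=
    {w | ∃ u : LTree (e.sec U), e.suppT u ⊆ ((T : Set M))ᶜ ∧ w = mono ℝ (e.sec U) u} with hS
  -- the difference of a section and its σ-multiple is supported away from T
  have hleaf : ∀ a : e.sec U, e.suppOf (a - e.fsmul U σ a) ⊆ ((T : Set M))ᶜ := by
    intro a x hx hxT
    rcases hx with ⟨hxU, hcond⟩
    have hone : fres IM M hTU σ = 1 := by
      ext y
      have : ((Opens.inclusion hTU y : U) : M) ∈ (T : Set M) := y.2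
      simpa [fres] using hσ (Opens.inclusion hTU y) this
    have h0 : e.res hTU (a - e.fsmul U σ a) = 0 := by
      rw [map_sub, e.res_fsmul hTU σ a, hone, e.fsmul_one, sub_self]
    exact hcond T hTU h0 hxT
  -- badness propagates up a tree
  have hbadL : ∀ (m : ℤ) (l r : LTree (e.sec U)), e.suppT l ⊆ ((T : Set M))ᶜ →
      e.suppT (.node m l r) ⊆ ((T : Set M))ᶜ := by
    intro m l r h
    have h1 : interior (e.suppT l) ∩ interior (e.suppT r) ⊆ ((T : Set M))ᶜ :=
      fun x hx => h (interior_subset hx.1)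
    exact closure_minimal h1 T.isOpen.isClosed_compl
  have hbadR : ∀ (m : ℤ) (l r : LTree (e.sec U)), e.suppT r ⊆ ((T : Set M))ᶜ →
      e.suppT (.node m l r) ⊆ ((T : Set M))ᶜ := by
    intro m l r h
    have h1 : interior (e.suppT l) ∩ interior (e.suppT r) ⊆ ((T : Set M))ᶜ :=
      fun x hx => h (interior_subset hx.2)
    exact closure_minimal h1 T.isOpen.isClosed_compl
  -- support of ρ (as a section) is contained in T
  have hρsupp : e.suppOf (e.emb U ρ) ⊆ (T : Set M) := by
    have hopen : IsOpen ((Subtype.val : U → M) '' ((tsupport (⇑ρ))ᶜ)) :=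
      U.isOpen.isOpenEmbedding_subtypeVal.isOpenMap _ (isClosed_tsupport _).isOpen_compl
    set W : Opens M := ⟨_, hopen⟩ with hW
    have hWU : W ≤ U := by rintro x ⟨y, -, rfl⟩; exact y.2
    have hres0 : fres IM M hWU ρ = 0 := by
      ext x
      have hx : ((x : W) : M) ∈ (W : Set M) := x.2
      rcases hx with ⟨y, hy, hyx⟩
      have hincl : (Opens.inclusion hWU x : U) = y := Subtype.ext hyx.symm
      have : ρ (Opens.inclusion hWU x) = 0 := by
        rw [hincl]; exact image_eq_zero_of_notMem_tsupport hy
      simpa [fres] using this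
    intro x hx
    rcases hx with ⟨hxU, hcond⟩
    by_contra hxT
    refine hcond W hWU ?_ ⟨⟨x, hxU⟩, fun hmem => hxT (hρ hmem), rfl⟩
    rw [e.emb_res hWU, hres0, map_zero]
  -- ρ ∘ₙ (bad monomial) has empty common support
  have hnode0 : ∀ (n : ℤ) (u : LTree (e.sec U)), e.suppT u ⊆ ((T : Set M))ᶜ →
      e.suppT (.node n (.leaf (e.emb U ρ)) u) = ∅ := by
    intro n u hu
    have h1 : interior (e.suppT (LTree.leaf (e.emb U ρ))) ∩ interior (e.suppT u)
        ⊆ (∅ : Set M) := by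
      rintro x ⟨h1, h2⟩
      exact (hu (interior_subset h2)) (hρsupp (interior_subset h1))
    have h2 : e.suppT (.node n (.leaf (e.emb U ρ)) u) ⊆ (∅ : Set M) :=
      closure_minimal h1 isClosed_empty
    exact Set.subset_empty_iff.mp h2
  -- hence it lies in K
  have hgenK : ∀ (n : ℤ) (u : LTree (e.sec U)), e.suppT u ⊆ ((T : Set M))ᶜ →
      mono ℝ (e.sec U) (.node n (.leaf (e.emb U ρ)) u) ∈ e.kIdeal U N₀ := by
    intro n u hu
    rw [OmegaModSheaf.kIdeal, IFA.idealGenBy, Submodule.mem_sInf]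
    intro J hJ
    exact hJ.2 (Or.inr ⟨_, ⟨n, _, u, rfl⟩, hnode0 n u hu, rfl⟩)
  -- span S is stable under products with monomials on either side
  have stepL : ∀ (m : ℤ) (r : LTree (e.sec U)) (z : FV ℝ (e.sec U)),
      z ∈ Submodule.span ℝ S → op ℝ (e.sec U) m z (mono ℝ (e.sec U) r)
        ∈ Submodule.span ℝ S := by
    intro m r z hz
    have hle : Submodule.span ℝ S ≤
        (Submodule.span ℝ S).comap (opLL m (mono ℝ (e.sec U) r)) := by
      rw [Submodule.span_le]
      rintro w ⟨u, hu, rfl⟩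
      exact Submodule.subset_span ⟨.node m u r, hbadL m u r hu, (mono_node m u r).symm⟩
    exact Submodule.mem_comap.mp (hle hz)
  have stepR : ∀ (m : ℤ) (l : LTree (e.sec U)) (z : FV ℝ (e.sec U)),
      z ∈ Submodule.span ℝ S → op ℝ (e.sec U) m (mono ℝ (e.sec U) l) z
        ∈ Submodule.span ℝ S := by
    intro m l z hz
    have hle : Submodule.span ℝ S ≤
        (Submodule.span ℝ S).comap (opRL m (mono ℝ (e.sec U) l)) := by
      rw [Submodule.span_le]
      rintro w ⟨u, hu, rfl⟩
      exact Submodule.subset_span ⟨.node m l u, hbadR m l u hu, (mono_node m l u).symm⟩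
    exact Submodule.mem_comap.mp (hle hz)
  -- telescoping: x − σ∗x lies in the span of bad monomials
  have key : ∀ t : LTree (e.sec U),
      mono ℝ (e.sec U) t - mono ℝ (e.sec U) (leafMap g t) ∈ Submodule.span ℝ S := by
    intro t
    induction t with
    | leaf a =>
        have : mono ℝ (e.sec U) (LTree.leaf a) - mono ℝ (e.sec U) (leafMap g (LTree.leaf a))
            = mono ℝ (e.sec U) (LTree.leaf (a - g a)) := by
          show mono ℝ (e.sec U) (LTree.leaf a) - mono ℝ (e.sec U) (LTree.leaf (g a)) = _
          rw [mono_leaf, mono_leaf, mono_leaf, iota_sub]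
        rw [this]
        exact Submodule.subset_span ⟨LTree.leaf (a - g a), hleaf a, rfl⟩
    | node m l r ihl ihr =>
        have heq : mono ℝ (e.sec U) (LTree.node m l r)
              - mono ℝ (e.sec U) (leafMap g (LTree.node m l r))
            = op ℝ (e.sec U) m
                (mono ℝ (e.sec U) l - mono ℝ (e.sec U) (leafMap g l))
                (mono ℝ (e.sec U) r)
              + op ℝ (e.sec U) m (mono ℝ (e.sec U) (leafMap g l))
                (mono ℝ (e.sec U) r - mono ℝ (e.sec U) (leafMap g r)) := by
          show mono ℝ (e.sec U) (LTree.node m l r)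
              - mono ℝ (e.sec U) (LTree.node m (leafMap g l) (leafMap g r)) = _
          rw [mono_node, mono_node, op_sub_left', op_sub_right']
          abel
        rw [heq]
        exact Submodule.add_mem _ (stepL m r _ ihl) (stepR m (leafMap g l) _ ihr)
  -- conclude
  intro t n
  rw [← op_sub_right']
  have hle : Submodule.span ℝ S ≤
      (e.kIdeal U N₀).comap (opRL n (ι ℝ (e.sec U) (e.emb U ρ))) := by
    rw [Submodule.span_le]
    rintro w ⟨u, hu, rfl⟩
    show op ℝ (e.sec U) n (ι ℝ (e.sec U) (e.emb U ρ)) (mono ℝ (e.sec U) u) ∈ e.kIdeal U N₀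
    rw [← mono_leaf, ← mono_node]
    exact hgenK n u hu
  exact Submodule.mem_comap.mp (hle (key t))
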